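/- arXiv:2511.16910 — 2 statements merged into one kernel-verified Lean document; each statement's English description precedes it below -/
import Mathlib

section
/- For a 3×3 matrix g over a commutative ring, let Λ²(g) denote the second compound matrix of g: the 3×3 matrix indexed by the two-element subsets {1,2}, {1,3}, {2,3} of {1,2,3} in lexicographic order, whose (I,J)-entry is the determinant of the 2×2 submatrix of g with rows I and columns J. Then: (i) for every g ∈ GL(3,ℤ), the matrix Λ²(g) lies in SL(3,ℤ); and (ii) for every M ∈ SL(3,ℤ) there exists g ∈ GL(3,ℤ) with Λ²(g) = M. That is, the image of the homomorphism Λ² : GL(3,ℤ) → GL(3,ℤ) is exactly SL(3,ℤ). -/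
/-- The two-element subsets `{1,2}, {1,3}, {2,3}` of `{1,2,3}` in lexicographic order,
each recorded as the increasing enumeration of its elements (0-indexed). -/
def rowsOf : Fin 3 → Fin 2 → Fin 3 := ![![0, 1], ![0, 2], ![1, 2]]

/-- The second compound matrix `Λ²(g)` of a 3×3 matrix `g`: its `(I, J)`-entry is the
determinant of the 2×2 submatrix of `g` with rows `I` and columns `J`. -/
def alt2 {R : Type*} [CommRing R] (g : Matrix (Fin 3) (Fin 3) R) :
    Matrix (Fin 3) (Fin 3) R :=
  fun I J => (g.submatrix (rowsOf I) (rowsOf J)).det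

/-- The determinant of the second compound of a 3×3 matrix is the square of the
determinant (Sylvester–Franke for `n = 3`, `k = 2`). -/
lemma det_alt2 (g : Matrix (Fin 3) (Fin 3) ℤ) : (alt2 g).det = g.det ^ 2 := by
  simp only [alt2, Matrix.det_fin_three, Matrix.det_fin_two]
  simp [alt2, rowsOf, Matrix.det_fin_three, Matrix.det_fin_two, Matrix.submatrix_apply]
  ring

/-- A candidate preimage of `M` under `Λ²`: the adjugate of the transpose of the matrix
obtained from `M` by reversing rows and columns and inserting checkerboard signs. -/
def preim (M : Matrix (Fin 3) (Fin 3) ℤ) : Matrix (Fin 3) (Fin 3) ℤ :=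
  (Matrix.of fun i j : Fin 3 =>
    (-1 : ℤ) ^ ((i : ℕ) + (j : ℕ)) * M (![2,1,0] i) (![2,1,0] j)).transpose.adjugate

lemma det_preim (M : Matrix (Fin 3) (Fin 3) ℤ) : (preim M).det = M.det ^ 2 := by
  rw [preim, Matrix.det_adjugate, Matrix.det_transpose]
  have : (Matrix.of fun i j : Fin 3 =>
      (-1 : ℤ) ^ ((i : ℕ) + (j : ℕ)) * M (![2,1,0] i) (![2,1,0] j)).det = M.det := by
    simp [Matrix.det_fin_three]
    ring
  rw [this]
  norm_num

lemma alt2_preim (M : Matrix (Fin 3) (Fin 3) ℤ) : alt2 (preim M) = M.det • M := by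
  ext I J
  fin_cases I <;> fin_cases J <;> simp only [alt2, Matrix.det_fin_two] <;>
    simp [alt2, rowsOf, preim, Matrix.adjugate_fin_three, Matrix.det_fin_two,
      Matrix.det_fin_three] <;> ring

/-- The image of `Λ² : GL(3,ℤ) → GL(3,ℤ)` is exactly `SL(3,ℤ)`:
(i) `Λ²(g) ∈ SL(3,ℤ)` for every `g ∈ GL(3,ℤ)`, and (ii) every `M ∈ SL(3,ℤ)` is of the
form `Λ²(g)` for some `g ∈ GL(3,ℤ)`. -/
theorem stmt5 :
    (∀ g : Matrix (Fin 3) (Fin 3) ℤ, (g.det = 1 ∨ g.det = -1) → (alt2 g).det = 1) ∧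
    (∀ M : Matrix (Fin 3) (Fin 3) ℤ, M.det = 1 →
      ∃ g : Matrix (Fin 3) (Fin 3) ℤ, (g.det = 1 ∨ g.det = -1) ∧ alt2 g = M) := by
  constructor
  · intro g h
    rcases h with h | h <;> rw [det_alt2, h] <;> ring
  · intro M hM
    exact ⟨preim M, Or.inl (by rw [det_preim, hM]; ring),
      by rw [alt2_preim, hM, one_smul]⟩
end

section
/- Let m ≥ 1 and let c be a coefficient sequence on {1,…,m}. In the exterior algebra Λ = Λ_ℚ(ℚ^m) on the standard basis e₁, …, e_m, set a_σ = (1/c_σ) · e_σ for each σ ⊆ {1,…,m}, where e_σ is the product of the e_i over i ∈ σ in increasing order (e_∅ = 1). Then the additive subgroup of Λ generated by the elements {a_σ : σ ⊆ {1,…,m}} contains 1 and is closed under multiplication; that is, it is a subring of Λ. -/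
noncomputable section

/-- The images `e₁, …, e_m` of the standard basis vectors of `ℚ^m` in the exterior
algebra `Λ_ℚ(ℚ^m)`. -/
def eVec (m : ℕ) (i : Fin m) : ExteriorAlgebra ℚ (Fin m → ℚ) :=
  ExteriorAlgebra.ι ℚ (Pi.single i 1)

/-- The monomial `e_σ`: product of the `e_i` over `i ∈ σ`, in increasing order. -/
def eMonm (m : ℕ) (σ : Finset (Fin m)) : ExteriorAlgebra ℚ (Fin m → ℚ) :=
  ((σ.sort (· ≤ ·)).map (eVec m)).prod

/-- The additive subgroup of `Λ_ℚ(ℚ^m)` generated by the elements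
`a_σ = (1/c_σ) • e_σ`. -/
def wGen (m : ℕ) (c : Finset (Fin m) → ℕ) :
    AddSubgroup (ExteriorAlgebra ℚ (Fin m → ℚ)) :=
  AddSubgroup.closure (Set.range fun σ : Finset (Fin m) => (c σ : ℚ)⁻¹ • eMonm m σ)

def fL (m : ℕ) (l : List (Fin m)) : ExteriorAlgebra ℚ (Fin m → ℚ) :=
  (l.map (eVec m)).prod

lemma fL_cons (m : ℕ) (a : Fin m) (l : List (Fin m)) :
    fL m (a :: l) = eVec m a * fL m l := by
  simp [fL]

lemma fL_append (m : ℕ) (l l' : List (Fin m)) :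
    fL m (l ++ l') = fL m l * fL m l' := by
  simp [fL]

lemma eVec_swap (m : ℕ) (a b : Fin m) :
    eVec m a * eVec m b = -(eVec m b * eVec m a) := by
  have := ExteriorAlgebra.ι_add_mul_swap (R := ℚ)
    (Pi.single a (1:ℚ) : Fin m → ℚ) (Pi.single b 1)
  rw [eq_neg_iff_add_eq_zero]
  exact this

lemma fL_perm (m : ℕ) {l l' : List (Fin m)} (h : l.Perm l') :
    ∃ ε : ℤ, (ε = 1 ∨ ε = -1) ∧ fL m l = ε • fL m l' := by
  induction h with
  | nil => exact ⟨1, Or.inl rfl, by simp⟩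
  | cons x h ih =>
    obtain ⟨ε, hε, he⟩ := ih
    exact ⟨ε, hε, by rw [fL_cons, fL_cons, he, mul_smul_comm]⟩
  | swap x y l =>
    refine ⟨-1, Or.inr rfl, ?_⟩
    rw [fL_cons, fL_cons, fL_cons, fL_cons, ← mul_assoc, ← mul_assoc,
      eVec_swap m y x]
    simp
  | trans h1 h2 ih1 ih2 =>
    obtain ⟨ε1, hε1, he1⟩ := ih1
    obtain ⟨ε2, hε2, he2⟩ := ih2
    refine ⟨ε1 * ε2, ?_, by rw [he1, he2, mul_smul]⟩
    rcases hε1 with rfl | rfl <;> rcases hε2 with rfl | rfl <;> simp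

lemma fL_of_not_nodup (m : ℕ) {l : List (Fin m)} (h : ¬ l.Nodup) :
    fL m l = 0 := by
  obtain ⟨a, ha⟩ := List.exists_duplicate_iff_not_nodup.mpr h
  rw [List.duplicate_iff_sublist] at ha
  obtain ⟨t, ht⟩ := ha.exists_perm_append
  obtain ⟨ε, hε, he⟩ := fL_perm m ht
  rw [he, fL_append, fL_cons, fL_cons, fL, List.map_nil, List.prod_nil, mul_one]
  have h0 : eVec m a * eVec m a = 0 := ExteriorAlgebra.ι_sq_zero _
  rw [h0, zero_mul, smul_zero]

lemma eMonm_mul_disjoint (m : ℕ) {σ τ : Finset (Fin m)} (h : Disjoint σ τ) :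
    ∃ ε : ℤ, (ε = 1 ∨ ε = -1) ∧
      eMonm m σ * eMonm m τ = ε • eMonm m (σ ∪ τ) := by
  have hperm : (σ.sort (· ≤ ·) ++ τ.sort (· ≤ ·)).Perm ((σ ∪ τ).sort (· ≤ ·)) := by
    rw [← Multiset.coe_eq_coe]
    have hco : ((σ.sort (· ≤ ·) ++ τ.sort (· ≤ ·) : List (Fin m)) : Multiset (Fin m)) =
        (σ.sort (· ≤ ·) : Multiset (Fin m)) + (τ.sort (· ≤ ·) : Multiset (Fin m)) := rfl
    rw [hco, Finset.sort_eq, Finset.sort_eq, Finset.sort_eq,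
      show σ ∪ τ = σ.disjUnion τ h from (Finset.disjUnion_eq_union σ τ h).symm]
    rfl
  obtain ⟨ε, hε, he⟩ := fL_perm m hperm
  exact ⟨ε, hε, by rw [eMonm, eMonm, ← fL, ← fL, ← fL_append, he]; rfl⟩

lemma eMonm_mul_not_disjoint (m : ℕ) {σ τ : Finset (Fin m)} (h : ¬ Disjoint σ τ) :
    eMonm m σ * eMonm m τ = 0 := by
  rw [eMonm, eMonm, ← fL, ← fL, ← fL_append]
  apply fL_of_not_nodup
  rw [List.nodup_append]
  intro ⟨_, _, hd⟩
  obtain ⟨a, haσ, haτ⟩ := Finset.not_disjoint_iff.mp h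
  exact hd a (by simpa using haσ) a (by simpa using haτ) rfl

/-- For a coefficient sequence `c`, the additive subgroup of
`Λ_ℚ(ℚ^m)` generated by the `a_σ = (1/c_σ) • e_σ` contains `1` and is closed under
multiplication, i.e. is a subring. -/
theorem stmt9 (m : ℕ) (hm : 1 ≤ m) (c : Finset (Fin m) → ℕ)
    (hpos : ∀ σ, 0 < c σ)
    (hone : ∀ σ : Finset (Fin m), σ.card ≤ 1 → c σ = 1)
    (hdvd : ∀ σ τ : Finset (Fin m), Disjoint σ τ → c σ * c τ ∣ c (σ ∪ τ)) :
    (1 : ExteriorAlgebra ℚ (Fin m → ℚ)) ∈ wGen m c ∧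
    ∀ x y : ExteriorAlgebra ℚ (Fin m → ℚ),
      x ∈ wGen m c → y ∈ wGen m c → x * y ∈ wGen m c := by
  have hone_mem : (1 : ExteriorAlgebra ℚ (Fin m → ℚ)) ∈ wGen m c := by
    have h : ((c ∅ : ℚ)⁻¹ • eMonm m ∅ : ExteriorAlgebra ℚ (Fin m → ℚ)) = 1 := by
      rw [hone ∅ (by simp)]
      simp [eMonm]
    exact h ▸ AddSubgroup.subset_closure (Set.mem_range_self ∅)
  refine ⟨hone_mem, ?_⟩
  have key : ∀ σ τ : Finset (Fin m),
      ((c σ : ℚ)⁻¹ • eMonm m σ) * ((c τ : ℚ)⁻¹ • eMonm m τ) ∈ wGen m c := by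
    intro σ τ
    rw [smul_mul_assoc, mul_smul_comm, smul_smul]
    by_cases h : Disjoint σ τ
    · obtain ⟨ε, hε, he⟩ := eMonm_mul_disjoint m h
      obtain ⟨k, hk⟩ := hdvd σ τ h
      have hk0 : 0 < k := by
        rcases Nat.eq_zero_or_pos k with rfl | hp
        · exfalso; have := hpos (σ ∪ τ); omega
        · exact hp
      have hcoef : (c σ : ℚ)⁻¹ * (c τ : ℚ)⁻¹ = (k : ℚ) * (c (σ ∪ τ) : ℚ)⁻¹ := by
        have hσ := (hpos σ).ne'
        have hτ := (hpos τ).ne'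
        have hu := (hpos (σ ∪ τ)).ne'
        field_simp
        push_cast [hk]
        ring
      have hz : ∀ (n : ℤ) (x : ExteriorAlgebra ℚ (Fin m → ℚ)), n • x = (n : ℚ) • x :=
        fun n x => (Int.cast_smul_eq_zsmul ℚ n x).symm
      have hmem : ((ε * k) • ((c (σ ∪ τ) : ℚ)⁻¹ • eMonm m (σ ∪ τ)) :
          ExteriorAlgebra ℚ (Fin m → ℚ)) ∈ wGen m c :=
        AddSubgroup.zsmul_mem _ (AddSubgroup.subset_closure (Set.mem_range_self (σ ∪ τ))) (ε * k)
      have heq : ((c σ : ℚ)⁻¹ * (c τ : ℚ)⁻¹) • (ε • eMonm m (σ ∪ τ)) =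
          (ε * (k : ℤ)) • ((c (σ ∪ τ) : ℚ)⁻¹ • eMonm m (σ ∪ τ)) := by
        rw [hz, hz, smul_smul, smul_smul]
        congr 1
        rw [hcoef]
        push_cast
        ring
      rw [he, heq]
      exact hmem
    · rw [eMonm_mul_not_disjoint m h, smul_zero]
      exact zero_mem _
  intro x y hx hy
  refine AddSubgroup.closure_induction₂ ?_ ?_ ?_ ?_ ?_ ?_ ?_ hx hy
  · rintro _ _ ⟨σ, rfl⟩ ⟨τ, rfl⟩
    exact key σ τ
  · intro x _; rw [zero_mul]; exact zero_mem _
  · intro x _; rw [mul_zero]; exact zero_mem _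
  · intro x y z _ _ _ h1 h2; rw [add_mul]; exact add_mem h1 h2
  · intro y z x _ _ _ h1 h2; rw [mul_add]; exact add_mem h1 h2
  · intro x y _ _ h1; rw [neg_mul]; exact neg_mem h1
  · intro x y _ _ h1; rw [mul_neg]; exact neg_mem h1

end
end
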